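/- Let X be a compact Hausdorff space, let λ₁, λ₂ : X → [-∞, 0] be upper semicontinuous functions and x₁₀, x₂₀ ∈ X points with λ₁(x₁₀) = 0 and λ₂(x₂₀) = 0, and let μ₁, μ₂ : C(X) → ℝ be defined by μᵢ(φ) = sup_{x ∈ X}(λᵢ(x) + φ(x)) (with (-∞) + t = -∞). Then the functional ξ⁰ : C(X × X) → ℝ defined by ξ⁰(φ) = max( φ(x₁₀, x₂₀), sup_{x ∈ X}(λ₂(x) + φ(x₁₀, x)), sup_{x ∈ X}(λ₁(x) + φ(x, x₂₀)) ) is an idempotent probability measure on X × X, and it is (μ₁, μ₂)-admissible. -/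

import Mathlib

noncomputable section

/-- An idempotent probability measure on a topological space `X`:
a functional `μ : C(X, ℝ) → ℝ` which sends constants to their values,
is `max`-`plus` homogeneous, and turns pointwise maxima into maxima. -/
def IsIPM {X : Type*} [TopologicalSpace X] (μ : C(X, ℝ) → ℝ) : Prop :=
  (∀ c : ℝ, μ (ContinuousMap.const X c) = c) ∧
  (∀ (c : ℝ) (φ : C(X, ℝ)), μ (ContinuousMap.const X c + φ) = c + μ φ) ∧
  (∀ φ ψ : C(X, ℝ), μ (φ ⊔ ψ) = max (μ φ) (μ ψ))

/-- `ξ` is a `(μ₁, μ₂)`-admissible idempotent probability measure on `X × X`. -/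
def IsAdmissible {X : Type*} [TopologicalSpace X]
    (μ₁ μ₂ : C(X, ℝ) → ℝ) (ξ : C(X × X, ℝ) → ℝ) : Prop :=
  IsIPM ξ ∧
  (∀ φ : C(X, ℝ), ξ (φ.comp ⟨Prod.fst, continuous_fst⟩) = μ₁ φ) ∧
  (∀ φ : C(X, ℝ), ξ (φ.comp ⟨Prod.snd, continuous_snd⟩) = μ₂ φ)

/-- The density of an idempotent probability measure. -/
def idemDensity {Z : Type*} [TopologicalSpace Z] (μ : C(Z, ℝ) → ℝ) (z : Z) : EReal :=
  sInf {r : EReal | ∃ φ : C(Z, ℝ), φ ≤ 0 ∧ φ z = 0 ∧ r = (μ φ : EReal)}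

/-- The support of an idempotent probability measure. -/
def idemSupp {Z : Type*} [TopologicalSpace Z] (μ : C(Z, ℝ) → ℝ) : Set Z :=
  {z | ⊥ < idemDensity μ z}

/-- The metric `ρ` of a metric space `X`, as a continuous function on `X × X`. -/
def rhoFun (X : Type*) [MetricSpace X] : C(X × X, ℝ) :=
  ⟨fun p => dist p.1 p.2, continuous_dist⟩

/-- The Uspenskii-type distance function `d_I` on idempotent probability measures. -/
def dI {X : Type*} [MetricSpace X] (μ₁ μ₂ : C(X, ℝ) → ℝ) : ℝ :=
  sInf {r : ℝ | ∃ ξ : C(X × X, ℝ) → ℝ, IsAdmissible μ₁ μ₂ ξ ∧ r = ξ (rhoFun X)}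

/-- The distance function `ρ_I` on idempotent probability measures. -/
def rhoI {X : Type*} [MetricSpace X] (μ₁ μ₂ : C(X, ℝ) → ℝ) : ℝ :=
  sInf {r : ℝ | ∃ ξ : C(X × X, ℝ) → ℝ, IsAdmissible μ₁ μ₂ ξ ∧
    r = sSup {s : ℝ | ∃ p ∈ idemSupp ξ, s = max (ξ (rhoFun X)) (dist p.1 p.2)}}


private lemma ereal_rearrange (a : EReal) (c t : ℝ) :
    a + ((c : EReal) + (t : EReal)) = (c : EReal) + (a + (t : EReal)) := by
  induction a using EReal.rec with
  | bot => simp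
  | coe r => norm_cast; ring
  | top => simp [EReal.coe_add]

private lemma ereal_cancel (c : ℝ) (x : EReal) :
    ((-c : ℝ) : EReal) + ((c : EReal) + x) = x := by
  induction x using EReal.rec with
  | bot => simp
  | coe r => norm_cast; ring
  | top => simp [EReal.coe_add]

private lemma ereal_sup_shift {ι : Type*} [Nonempty ι] (c : ℝ) (f : ι → EReal) :
    ⨆ i, ((c : EReal) + f i) = (c : EReal) + ⨆ i, f i := by
  apply le_antisymm
  · exact iSup_le fun i => add_le_add_right (le_iSup f i) _
  · have h1 : (⨆ i, f i) ≤ ((-c : ℝ) : EReal) + ⨆ i, ((c : EReal) + f i) := by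
      refine iSup_le fun i => ?_
      calc f i = ((-c : ℝ) : EReal) + ((c : EReal) + f i) := (ereal_cancel c (f i)).symm
        _ ≤ _ := add_le_add_right (le_iSup (fun i => (c : EReal) + f i) i) _
    calc (c : EReal) + ⨆ i, f i
        ≤ (c : EReal) + (((-c : ℝ) : EReal) + ⨆ i, ((c : EReal) + f i)) :=
          add_le_add_right h1 _
      _ = ⨆ i, ((c : EReal) + f i) := by
          have := ereal_cancel (-c) (⨆ i, ((c : EReal) + f i))
          rwa [neg_neg] at this

private lemma ereal_sup_const {X : Type*} (lam : X → EReal) (hle : ∀ x, lam x ≤ 0)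
    (x₀ : X) (h0 : lam x₀ = 0) (c : ℝ) :
    ⨆ x, (lam x + (c : EReal)) = (c : EReal) := by
  apply le_antisymm
  · refine iSup_le fun x => ?_
    calc lam x + (c : EReal) ≤ 0 + (c : EReal) := add_le_add_left (hle x) _
      _ = (c : EReal) := zero_add _
  · have := le_iSup (fun x => lam x + (c : EReal)) x₀
    rwa [h0, zero_add] at this

private lemma ereal_coe_max (a b : ℝ) : ((max a b : ℝ) : EReal) = max (a : EReal) (b : EReal) :=
  EReal.coe_strictMono.monotone.map_max

theorem stmt4 {X : Type*} [TopologicalSpace X] [CompactSpace X] [T2Space X]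
    (lam₁ lam₂ : X → EReal)
    (h₁usc : UpperSemicontinuous lam₁) (h₂usc : UpperSemicontinuous lam₂)
    (h₁le : ∀ x, lam₁ x ≤ 0) (h₂le : ∀ x, lam₂ x ≤ 0)
    (x₁₀ x₂₀ : X) (h₁0 : lam₁ x₁₀ = 0) (h₂0 : lam₂ x₂₀ = 0)
    (μ₁ μ₂ : C(X, ℝ) → ℝ)
    (hμ₁ : ∀ φ : C(X, ℝ), (μ₁ φ : EReal) = ⨆ x, lam₁ x + (φ x : EReal))
    (hμ₂ : ∀ φ : C(X, ℝ), (μ₂ φ : EReal) = ⨆ x, lam₂ x + (φ x : EReal))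
    (ξ₀ : C(X × X, ℝ) → ℝ)
    (hξ₀ : ∀ φ : C(X × X, ℝ), (ξ₀ φ : EReal) =
      max (φ (x₁₀, x₂₀) : EReal)
        (max (⨆ x, lam₂ x + (φ (x₁₀, x) : EReal))
             (⨆ x, lam₁ x + (φ (x, x₂₀) : EReal)))) :
    IsIPM ξ₀ ∧ IsAdmissible μ₁ μ₂ ξ₀ := by
  have : Nonempty X := ⟨x₁₀⟩
  -- key helper: φ x₁₀ ≤ μ₁ φ and φ x₂₀ ≤ μ₂ φ
  have hle₁ : ∀ φ : C(X, ℝ), ((φ x₁₀ : ℝ) : EReal) ≤ (μ₁ φ : EReal) := by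
    intro φ
    rw [hμ₁]
    calc ((φ x₁₀ : ℝ) : EReal) = lam₁ x₁₀ + (φ x₁₀ : EReal) := by rw [h₁0, zero_add]
      _ ≤ _ := le_iSup (fun x => lam₁ x + ((φ x : ℝ) : EReal)) x₁₀
  have hle₂ : ∀ φ : C(X, ℝ), ((φ x₂₀ : ℝ) : EReal) ≤ (μ₂ φ : EReal) := by
    intro φ
    rw [hμ₂]
    calc ((φ x₂₀ : ℝ) : EReal) = lam₂ x₂₀ + (φ x₂₀ : EReal) := by rw [h₂0, zero_add]
      _ ≤ _ := le_iSup (fun x => lam₂ x + ((φ x : ℝ) : EReal)) x₂₀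
  have hIPM : IsIPM ξ₀ := by
    refine ⟨?_, ?_, ?_⟩
    · intro c
      have h := hξ₀ (ContinuousMap.const (X × X) c)
      simp only [ContinuousMap.const_apply] at h
      rw [ereal_sup_const lam₂ h₂le x₂₀ h₂0 c, ereal_sup_const lam₁ h₁le x₁₀ h₁0 c,
        max_self, max_self] at h
      exact_mod_cast h
    · intro c φ
      have h := hξ₀ (ContinuousMap.const (X × X) c + φ)
      simp only [ContinuousMap.add_apply, ContinuousMap.const_apply, EReal.coe_add,
        ereal_rearrange, ereal_sup_shift, max_add_add_left] at h
      have h2 : ((c + ξ₀ φ : ℝ) : EReal) = (c : EReal) + (ξ₀ φ : EReal) := by push_cast; rfl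
      rw [hξ₀ φ] at h2
      exact_mod_cast h.trans h2.symm
    · intro φ ψ
      have h := hξ₀ (φ ⊔ ψ)
      simp only [ContinuousMap.sup_apply, ereal_coe_max,
        ← max_add_add_left] at h
      have hsup : ∀ (lam : X → EReal) (f g : X → EReal),
          (⨆ x, max (lam x + f x) (lam x + g x)) =
            max (⨆ x, lam x + f x) (⨆ x, lam x + g x) := by
        intro lam f g
        simpa using
          iSup_sup_eq (f := fun x => lam x + f x) (g := fun x => lam x + g x)
      rw [hsup lam₂, hsup lam₁] at h
      have h2 : ((max (ξ₀ φ) (ξ₀ ψ) : ℝ) : EReal) = max (ξ₀ φ : EReal) (ξ₀ ψ : EReal) :=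
        ereal_coe_max _ _
      rw [hξ₀ φ, hξ₀ ψ] at h2
      rw [max_max_max_comm, max_max_max_comm
        (⨆ x, lam₂ x + ((φ (x₁₀, x) : ℝ) : EReal))] at h2
      exact_mod_cast h.trans h2.symm
  have hproj₁ : ∀ φ : C(X, ℝ), ξ₀ (φ.comp ⟨Prod.fst, continuous_fst⟩) = μ₁ φ := by
    intro φ
    have h := hξ₀ (φ.comp ⟨Prod.fst, continuous_fst⟩)
    simp only [ContinuousMap.comp_apply, ContinuousMap.coe_mk] at h
    rw [ereal_sup_const lam₂ h₂le x₂₀ h₂0 (φ x₁₀), ← hμ₁ φ] at h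
    rw [← max_assoc, max_self, max_eq_right (hle₁ φ)] at h
    exact_mod_cast h
  have hproj₂ : ∀ φ : C(X, ℝ), ξ₀ (φ.comp ⟨Prod.snd, continuous_snd⟩) = μ₂ φ := by
    intro φ
    have h := hξ₀ (φ.comp ⟨Prod.snd, continuous_snd⟩)
    simp only [ContinuousMap.comp_apply, ContinuousMap.coe_mk] at h
    rw [← hμ₂ φ, ereal_sup_const lam₁ h₁le x₁₀ h₁0 (φ x₂₀)] at h
    rw [max_comm ((μ₂ φ : ℝ) : EReal), ← max_assoc, max_self, max_eq_right (hle₂ φ)] at h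
    exact_mod_cast h
  exact ⟨hIPM, hIPM, hproj₁, hproj₂⟩
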